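/- Let ρ be any complex matrix indexed by (Fin dA × Fin dB) × (Fin dA × Fin dB), let n ≥ 1, let σ ∈ Perm (Fin (2n)) be the product of transpositions (1 2)(3 4)⋯(2n−1 2n) and τ ∈ Perm (Fin (2n)) the product of transpositions (2 3)(4 5)⋯(2n 1). Then trace((W_σ^A ⊗ W_τ^B) * ρ^{⊗2n}) = trace((W_τ^A ⊗ W_σ^B) * ρ^{⊗2n}); i.e., the two pairing patterns of SWAP operators assigned to the two parties may be exchanged without changing the expectation value on 2n identical copies. -/
import Mathlib


open Matrix

/-- The `m`-fold tensor power of a square matrix, as a matrix on `Fin m → D`. -/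
noncomputable def tensorPow {D : Type*} [Fintype D] (ρ : Matrix D D ℂ) (m : ℕ) :
    Matrix (Fin m → D) (Fin m → D) ℂ :=
  Matrix.of fun x y => ∏ t, ρ (x t) (y t)

/-- The per-party permutation operator `W_σ^A ⊗ W_τ^B` on `m` copies of a bipartite system. -/
noncomputable def permOp2 {dA dB : ℕ} {m : ℕ} (σ τ : Equiv.Perm (Fin m)) :
    Matrix (Fin m → Fin dA × Fin dB) (Fin m → Fin dA × Fin dB) ℂ :=
  Matrix.of fun x y =>
    if ∀ t, (x t).1 = (y (σ t)).1 ∧ (x t).2 = (y (τ t)).2 then 1 else 0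

/-- The two pairing patterns of SWAP operators — `σ = (1 2)(3 4)⋯(2n−1 2n)` and the
cyclically shifted `τ = (2 3)(4 5)⋯(2n 1)` (written here 0-indexed) — assigned to the two
parties may be exchanged without changing the expectation value on `2n` identical copies:
`trace((W_σ^A ⊗ W_τ^B) ρ^{⊗2n}) = trace((W_τ^A ⊗ W_σ^B) ρ^{⊗2n})`. -/
theorem swap_pairing_exchange {dA dB n : ℕ} (hn : 1 ≤ n)
    (ρ : Matrix (Fin dA × Fin dB) (Fin dA × Fin dB) ℂ)
    (σ τ : Equiv.Perm (Fin (2 * n)))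
    (hσ : ∀ t : Fin (2 * n),
      ((σ t : Fin (2 * n)) : ℕ) = if (t : ℕ) % 2 = 0 then (t : ℕ) + 1 else (t : ℕ) - 1)
    (hτ : ∀ t : Fin (2 * n),
      ((τ t : Fin (2 * n)) : ℕ) =
        if (t : ℕ) % 2 = 1 then ((t : ℕ) + 1) % (2 * n)
        else ((t : ℕ) + (2 * n - 1)) % (2 * n)) :
    Matrix.trace (permOp2 σ τ * tensorPow ρ (2 * n)) =
      Matrix.trace (permOp2 τ σ * tensorPow ρ (2 * n)) := by
  haveI : NeZero (2 * n) := ⟨by omega⟩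
  have hlt : 1 < 2 * n := by omega
  have hv1 : ((1 : Fin (2 * n)) : ℕ) = 1 := by
    simp [Fin.val_one', Nat.mod_eq_of_lt hlt]
  have hvadd : ∀ t : Fin (2 * n), ((t + 1 : Fin (2 * n)) : ℕ) = ((t : ℕ) + 1) % (2 * n) := by
    intro t; rw [Fin.val_add, hv1]
  -- key conjugation identities
  have key1 : ∀ t : Fin (2 * n), σ (t + 1) = τ t + 1 := by
    intro t
    have ht : (t : ℕ) < 2 * n := t.isLt
    apply Fin.ext
    rw [hσ, hvadd, hvadd, hτ]
    rcases Nat.mod_two_eq_zero_or_one (t : ℕ) with hp | hp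
    · -- t even
      have h1 : (t : ℕ) + 1 < 2 * n := by omega
      rw [Nat.mod_eq_of_lt h1, if_neg (by omega), if_neg (by omega)]
      rcases Nat.eq_zero_or_pos (t : ℕ) with h0 | h0
      · rw [h0]
        have e1 : (0 + (2 * n - 1)) % (2 * n) = 0 + (2 * n - 1) := Nat.mod_eq_of_lt (by omega)
        rw [e1]
        have e2 : 0 + (2 * n - 1) + 1 = 2 * n := by omega
        rw [e2, Nat.mod_self]
      · have h2 : (t : ℕ) + (2 * n - 1) = 2 * n + ((t : ℕ) - 1) := by omega
        rw [h2, Nat.add_mod_left,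
          Nat.mod_eq_of_lt (show (t : ℕ) - 1 < 2 * n by omega),
          Nat.mod_eq_of_lt (show (t : ℕ) - 1 + 1 < 2 * n by omega)]
        omega
    · -- t odd
      rcases Nat.lt_or_ge ((t : ℕ) + 1) (2 * n) with h1 | h1
      · rw [Nat.mod_eq_of_lt h1, if_pos (by omega), if_pos hp,
          Nat.mod_eq_of_lt (show (t : ℕ) + 1 + 1 < 2 * n by omega)]
      · have h2 : (t : ℕ) + 1 = 2 * n := by omega
        rw [h2, Nat.mod_self, if_pos (by omega), if_pos hp,
          Nat.mod_eq_of_lt (show 0 + 1 < 2 * n by omega)]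
  have key2 : ∀ t : Fin (2 * n), τ (t + 1) = σ t + 1 := by
    intro t
    have ht : (t : ℕ) < 2 * n := t.isLt
    apply Fin.ext
    rw [hτ, hvadd, hvadd, hσ]
    rcases Nat.mod_two_eq_zero_or_one (t : ℕ) with hp | hp
    · -- t even
      have h1 : (t : ℕ) + 1 < 2 * n := by omega
      rw [Nat.mod_eq_of_lt h1, if_pos (by omega), if_pos hp]
    · -- t odd
      rcases Nat.lt_or_ge ((t : ℕ) + 1) (2 * n) with h1 | h1
      · rw [Nat.mod_eq_of_lt h1, if_neg (by omega), if_neg (by omega)]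
        have h2 : (t : ℕ) + 1 + (2 * n - 1) = 2 * n + (t : ℕ) := by omega
        rw [h2, Nat.add_mod_left, Nat.mod_eq_of_lt ht]
        have h3 : (t : ℕ) - 1 + 1 = (t : ℕ) := by omega
        rw [h3, Nat.mod_eq_of_lt ht]
      · have h2 : (t : ℕ) + 1 = 2 * n := by omega
        rw [h2, Nat.mod_self, if_neg (by omega), if_neg (by omega)]
        have h3 : (t : ℕ) - 1 + 1 = (t : ℕ) := by omega
        rw [h3, Nat.mod_eq_of_lt ht, Nat.zero_add, Nat.mod_eq_of_lt (by omega)]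
        omega
  -- trace as an explicit double sum
  have tr : ∀ α β : Equiv.Perm (Fin (2 * n)),
      Matrix.trace (permOp2 α β * tensorPow ρ (2 * n)) =
        ∑ x : Fin (2 * n) → Fin dA × Fin dB, ∑ y : Fin (2 * n) → Fin dA × Fin dB,
          (if ∀ t, (x t).1 = (y (α t)).1 ∧ (x t).2 = (y (β t)).2
            then ∏ t, ρ (y t) (x t) else 0) := by
    intro α β
    simp [Matrix.trace, Matrix.diag, Matrix.mul_apply, permOp2, tensorPow,
      ite_mul, one_mul, zero_mul]
  rw [tr σ τ, tr τ σ]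
  -- reindex both sums by the cyclic shift
  let e : Equiv.Perm (Fin (2 * n) → Fin dA × Fin dB) :=
    { toFun := fun x t => x (t + 1)
      invFun := fun x t => x (t - 1)
      left_inv := fun x => funext fun t => by simp
      right_inv := fun x => funext fun t => by simp }
  refine Fintype.sum_equiv e _ _ fun x => ?_
  refine Fintype.sum_equiv e _ _ fun y => ?_
  have hex : ∀ t, e x t = x (t + 1) := fun _ => rfl
  have hey : ∀ t, e y t = y (t + 1) := fun _ => rfl
  have hsub : ∀ s : Fin (2 * n), s - 1 + 1 = s := fun s => by simp
  have hcond : (∀ t, (e x t).1 = (e y (τ t)).1 ∧ (e x t).2 = (e y (σ t)).2)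
      ↔ (∀ t, (x t).1 = (y (σ t)).1 ∧ (x t).2 = (y (τ t)).2) := by
    constructor
    · intro h t
      obtain ⟨h1, h2⟩ := h (t - 1)
      rw [hex, hey] at h1
      rw [hex, hey] at h2
      rw [hsub, ← key1, hsub] at h1
      rw [hsub, ← key2, hsub] at h2
      exact ⟨h1, h2⟩
    · intro h t
      obtain ⟨h1, h2⟩ := h (t + 1)
      rw [hex, hey, hey, ← key1, ← key2]
      exact ⟨h1, h2⟩
  have hprod : (∏ t, ρ (e y t) (e x t)) = ∏ t, ρ (y t) (x t) := by
    exact Equiv.prod_comp (Equiv.addRight (1 : Fin (2 * n))) fun t => ρ (y t) (x t)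
  rw [if_congr hcond hprod rfl]
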